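/- (Theorem 2) Let n be an even positive integer, let m < n/2, and let α_1,…,α_m ≥ 0. Let V be the n×n real circulant symmetric matrix with first column given by v_0 = 1 + 2(α_1 + ⋯ + α_m), v_j = v_{n−j} = −α_j for 1 ≤ j ≤ m, and v_j = 0 for m < j < n − m. Then V is positive definite and |Tr(F_n · log₂ V)| = log₂(1 + 4(α_1 + α_3 + α_5 + ⋯)), where the sum runs over the coupling coefficients with odd index. -/

import Mathlib

open Matrix
open Fin.NatCast Fin.CommRing

/-- The `m × m` flip matrix `F_m`: with 0-based indices, entry `(i,j)` is `1`
iff `i + j = m - 1`. -/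
noncomputable def flipMat (m : ℕ) : Matrix (Fin m) (Fin m) ℝ :=
  Matrix.of fun i j => if (i : ℕ) + (j : ℕ) = m - 1 then 1 else 0

/-- Matrix base-2 logarithm `log₂ M = (log M)/ln 2` defined via the continuous
functional calculus (spectral calculus). -/
noncomputable def mlogb2 {k : ℕ} (M : Matrix (Fin k) (Fin k) ℝ) :
    Matrix (Fin k) (Fin k) ℝ :=
  cfc (fun x : ℝ => Real.logb 2 x) M

lemma diag_mulVec_eq_smul_of_key {N : ℕ} {d w : Fin N → ℝ} {μ : ℝ}
    (h : ∀ i, d i * w i = μ * w i) (f : ℝ → ℝ) :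
    diagonal (f ∘ d) *ᵥ w = f μ • w := by
  ext i
  rw [mulVec_diagonal]
  rcases eq_or_ne (w i) 0 with h0 | h0
  · simp [h0]
  · have : d i = μ := mul_right_cancel₀ h0 (h i)
    simp [this, Function.comp_apply]

lemma cfc_mulVec_eigenvector {N : ℕ} {A : Matrix (Fin N) (Fin N) ℝ}
    (hA : A.IsHermitian) (f : ℝ → ℝ) {u : Fin N → ℝ} {μ : ℝ}
    (hu : A *ᵥ u = μ • u) : cfc f A *ᵥ u = f μ • u := by
  rw [hA.cfc_eq f, Matrix.IsHermitian.cfc]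
  set U := (hA.eigenvectorUnitary : Matrix (Fin N) (Fin N) ℝ) with hU
  have hs : star U * U = 1 := Unitary.star_mul_self_of_mem hA.eigenvectorUnitary.2
  have hs' : U * star U = 1 := Unitary.mul_star_self_of_mem hA.eigenvectorUnitary.2
  set d : Fin N → ℝ := hA.eigenvalues with hd
  have hofReal : (RCLike.ofReal ∘ d : Fin N → ℝ) = d := by
    ext i; simp [RCLike.ofReal_real_eq_id]
  have hofRealf : (RCLike.ofReal ∘ f ∘ d : Fin N → ℝ) = f ∘ d := by
    ext i; simp [RCLike.ofReal_real_eq_id]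
  have hspec : A = U * diagonal d * star U := by
    have := hA.spectral_theorem
    rwa [hofReal] at this
  set w : Fin N → ℝ := star U *ᵥ u with hw
  have h2 : star U * A = diagonal d * star U := by
    conv_lhs => rw [hspec]
    rw [← mul_assoc, ← mul_assoc, hs, one_mul]
  have e1 : diagonal d *ᵥ w = μ • w := by
    calc diagonal d *ᵥ w = (diagonal d * star U) *ᵥ u := by rw [hw, mulVec_mulVec]
      _ = (star U * A) *ᵥ u := by rw [h2]
      _ = star U *ᵥ (A *ᵥ u) := by rw [mulVec_mulVec]
      _ = star U *ᵥ (μ • u) := by rw [hu]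
      _ = μ • w := by rw [mulVec_smul, hw]
  have hkey : ∀ i, d i * w i = μ * w i := fun i => by
    have := congrFun e1 i
    simpa [mulVec_diagonal] using this
  rw [hofRealf]
  calc (U * diagonal (f ∘ d) * star U) *ᵥ u
      = U *ᵥ (diagonal (f ∘ d) *ᵥ w) := by rw [hw, mulVec_mulVec, mulVec_mulVec]
    _ = U *ᵥ (f μ • w) := by rw [diag_mulVec_eq_smul_of_key hkey]
    _ = f μ • (U *ᵥ w) := by rw [mulVec_smul]
    _ = f μ • u := by rw [hw, mulVec_mulVec, hs', one_mulVec]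

lemma cfc_commute {N : ℕ} {A S : Matrix (Fin N) (Fin N) ℝ}
    (hA : A.IsHermitian) (f : ℝ → ℝ) (h : S * A = A * S) :
    S * cfc f A = cfc f A * S := by
  rw [hA.cfc_eq f, Matrix.IsHermitian.cfc]
  set U := (hA.eigenvectorUnitary : Matrix (Fin N) (Fin N) ℝ) with hU
  have hs : star U * U = 1 := Unitary.star_mul_self_of_mem hA.eigenvectorUnitary.2
  have hs' : U * star U = 1 := Unitary.mul_star_self_of_mem hA.eigenvectorUnitary.2
  set d : Fin N → ℝ := hA.eigenvalues with hd
  have hofReal : (RCLike.ofReal ∘ d : Fin N → ℝ) = d := by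
    ext i; simp [RCLike.ofReal_real_eq_id]
  have hofRealf : (RCLike.ofReal ∘ f ∘ d : Fin N → ℝ) = f ∘ d := by
    ext i; simp [RCLike.ofReal_real_eq_id]
  have hspec : A = U * diagonal d * star U := by
    have := hA.spectral_theorem
    rwa [hofReal] at this
  rw [hofRealf]
  set M : Matrix (Fin N) (Fin N) ℝ := star U * S * U with hM
  have hMD : M * diagonal d = diagonal d * M := by
    have hAU : A * U = U * diagonal d := by
      rw [hspec, mul_assoc, mul_assoc, hs, mul_one]
    have hUA : star U * A = diagonal d * star U := by
      conv_lhs => rw [hspec]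
      rw [← mul_assoc, ← mul_assoc, hs, one_mul]
    calc M * diagonal d = star U * S * (U * diagonal d) := by rw [hM, mul_assoc]
      _ = star U * S * (A * U) := by rw [hAU]
      _ = star U * (S * A) * U := by noncomm_ring
      _ = star U * (A * S) * U := by rw [h]
      _ = (star U * A) * (S * U) := by noncomm_ring
      _ = diagonal d * (star U * (S * U)) := by rw [hUA, mul_assoc]
      _ = diagonal d * M := by rw [hM, mul_assoc]
  have hkey : ∀ i j, M i j * d j = d i * M i j := by
    intro i j
    have := congrFun (congrFun hMD i) j
    simpa only [Matrix.mul_diagonal, Matrix.diagonal_mul] using this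
  have hMDf : M * diagonal (f ∘ d) = diagonal (f ∘ d) * M := by
    ext i j
    rw [mul_diagonal, diagonal_mul]
    rcases eq_or_ne (M i j) 0 with h0 | h0
    · simp [h0]
    · have hz : M i j * (d j - d i) = 0 := by
        have hk := hkey i j; ring_nf; ring_nf at hk; linarith
      have : d j = d i := by
        rcases mul_eq_zero.mp hz with hk | hk
        · exact absurd hk h0
        · exact sub_eq_zero.mp hk
      simp [Function.comp_apply, this, mul_comm]
  have hSU : S * U = U * M := by
    rw [hM, ← mul_assoc, ← mul_assoc, hs', one_mul]
  have hUS : star U * S = M * star U := by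
    rw [hM, mul_assoc, mul_assoc, hs', mul_one]
  calc S * (U * diagonal (f ∘ d) * star U)
      = (S * U) * diagonal (f ∘ d) * star U := by noncomm_ring
    _ = U * M * diagonal (f ∘ d) * star U := by rw [hSU]
    _ = U * (M * diagonal (f ∘ d)) * star U := by noncomm_ring
    _ = U * (diagonal (f ∘ d) * M) * star U := by rw [hMDf]
    _ = U * diagonal (f ∘ d) * (M * star U) := by noncomm_ring
    _ = U * diagonal (f ∘ d) * (star U * S) := by rw [hUS]
    _ = U * diagonal (f ∘ d) * star U * S := by noncomm_ring



lemma neg_one_pow_nat_mod {n : ℕ} (hn : Even n) (x : ℕ) :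
    ((-1:ℝ))^(x % n) = (-1)^x := by
  conv_rhs => rw [← Nat.div_add_mod x n]
  rw [pow_add, pow_mul, hn.neg_one_pow, one_pow, one_mul]

lemma chi_add {n : ℕ} (hn : Even n) (i j : Fin n) :
    ((-1:ℝ))^(((i + j) : Fin n) : ℕ) = (-1)^(i:ℕ) * (-1)^(j:ℕ) := by
  rw [Fin.val_add, neg_one_pow_nat_mod hn, pow_add]

lemma chi_neg {n : ℕ} [NeZero n] (hn : Even n) (l : Fin n) :
    ((-1:ℝ))^(((-l) : Fin n) : ℕ) = (-1)^(l:ℕ) := by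
  have h1 : ((-1:ℝ))^(l:ℕ) * ((-1:ℝ))^(((-l) : Fin n) : ℕ) = 1 := by
    rw [← chi_add hn l (-l), add_neg_cancel]
    simp
  have h2 : ((-1:ℝ))^(l:ℕ) * ((-1:ℝ))^(l:ℕ) = 1 := by
    rw [← pow_add, ← two_mul]
    exact (even_two_mul _).neg_one_pow
  have hne : ((-1:ℝ))^(l:ℕ) ≠ 0 := by positivity
  exact mul_left_cancel₀ hne (h1.trans h2.symm)

lemma sum_range_two_mul (F : ℕ → ℝ) (k : ℕ) :
    ∑ j ∈ Finset.range (2*k), F j = ∑ i ∈ Finset.range k, (F (2*i) + F (2*i+1)) := by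
  induction k with
  | zero => simp
  | succ k ih =>
    rw [Nat.mul_succ, Finset.sum_range_succ, Finset.sum_range_succ, Finset.sum_range_succ, ih]
    ring



lemma sum_v_mul (n : ℕ) (hn : Even n) (hn0 : 0 < n) (m : ℕ) (hm2 : 2*m + 2 ≤ n)
    (a : ℕ → ℝ)
    (v : Fin n → ℝ)
    (hv : ∀ l : Fin n, v l =
      if (l : ℕ) = 0 then 1 + 2 * ∑ j ∈ Finset.Icc 1 m, a j
      else if (l : ℕ) ≤ m then -a (l : ℕ)
      else if n - (l : ℕ) ≤ m then -a (n - (l : ℕ))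
      else 0)
    (w : Fin n → ℝ) :
    haveI : NeZero n := ⟨hn0.ne'⟩
    ∑ l : Fin n, v l * w l
      = (1 + 2 * ∑ j ∈ Finset.Icc 1 m, a j) * w 0
        + ∑ j ∈ Finset.Icc 1 m, (-a j) * (w ((j : ℕ) : Fin n) + w (-((j : ℕ) : Fin n))) := by
  haveI : NeZero n := ⟨hn0.ne'⟩
  set f : ℕ → ℝ := fun i => v ((i : ℕ) : Fin n) * w ((i : ℕ) : Fin n) with hf
  have hcast : ∀ i : ℕ, i < n → (((i : ℕ) : Fin n) : ℕ) = i := fun i hi => by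
    rw [Fin.val_natCast]; exact Nat.mod_eq_of_lt hi
  have h0 : ∑ l : Fin n, v l * w l = ∑ i ∈ Finset.range n, f i := by
    rw [← Fin.sum_univ_eq_sum_range f n]
    refine Finset.sum_congr rfl fun l _ => ?_
    simp only [hf, Fin.cast_val_eq_self]
  rw [h0, Finset.range_eq_Ico,
    ← Finset.sum_Ico_consecutive f (Nat.zero_le (n - m)) (Nat.sub_le n m),
    ← Finset.sum_Ico_consecutive f (Nat.zero_le (m+1)) (by omega : m + 1 ≤ n - m),
    ← Finset.sum_Ico_consecutive f (Nat.zero_le 1) (by omega : 1 ≤ m + 1)]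
  have p0 : ∑ i ∈ Finset.Ico 0 1, f i = (1 + 2 * ∑ j ∈ Finset.Icc 1 m, a j) * w 0 := by
    rw [show Finset.Ico 0 1 = {0} from rfl, Finset.sum_singleton]
    have : ((0 : ℕ) : Fin n) = 0 := Nat.cast_zero
    rw [hf]; simp only [this]
    rw [hv 0]
    simp
  have p1 : ∑ i ∈ Finset.Ico 1 (m+1), f i
      = ∑ j ∈ Finset.Icc 1 m, (-a j) * w ((j : ℕ) : Fin n) := by
    rw [Finset.Ico_add_one_right_eq_Icc]
    refine Finset.sum_congr rfl fun i hi => ?_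
    rw [Finset.mem_Icc] at hi
    have hin : i < n := by omega
    have hival := hcast i hin
    show v ((i : ℕ) : Fin n) * w ((i : ℕ) : Fin n) = _
    rw [hv, hival, if_neg (by omega), if_pos (by omega)]
  have p2 : ∑ i ∈ Finset.Ico (m+1) (n-m), f i = 0 := by
    refine Finset.sum_eq_zero fun i hi => ?_
    rw [Finset.mem_Ico] at hi
    have hin : i < n := by omega
    have hival := hcast i hin
    show v ((i : ℕ) : Fin n) * w ((i : ℕ) : Fin n) = 0
    rw [hv, hival, if_neg (by omega), if_neg (by omega), if_neg (by omega), zero_mul]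
  have p3 : ∑ i ∈ Finset.Ico (n-m) n, f i
      = ∑ j ∈ Finset.Icc 1 m, (-a j) * w (-((j : ℕ) : Fin n)) := by
    refine Finset.sum_nbij' (fun i => n - i) (fun j => n - j) ?_ ?_ ?_ ?_ ?_
    · intro i hi; rw [Finset.mem_Ico] at hi; rw [Finset.mem_Icc]; omega
    · intro j hj; rw [Finset.mem_Icc] at hj; rw [Finset.mem_Ico]; omega
    · intro i hi; rw [Finset.mem_Ico] at hi; omega
    · intro j hj; rw [Finset.mem_Icc] at hj; omega
    · intro i hi
      rw [Finset.mem_Ico] at hi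
      have hin : i < n := by omega
      have hival := hcast i hin
      have hneg : ((i : ℕ) : Fin n) = -(((n - i : ℕ) : Fin n)) := by
        refine eq_neg_of_add_eq_zero_right ?_
        rw [← Nat.cast_add, show n - i + i = n by omega, Fin.natCast_self]
      show v ((i : ℕ) : Fin n) * w ((i : ℕ) : Fin n) = -a (n - i) * w (-((n - i : ℕ) : Fin n))
      rw [hv, hival, if_neg (by omega), if_neg (by omega), if_pos (by omega), ← hneg]
  rw [p0, p1, p2, p3]
  have hfin : ∑ j ∈ Finset.Icc 1 m, (-a j) * (w ((j : ℕ) : Fin n) + w (-((j : ℕ) : Fin n)))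
      = (∑ j ∈ Finset.Icc 1 m, -a j * w ((j : ℕ) : Fin n))
        + ∑ j ∈ Finset.Icc 1 m, -a j * w (-((j : ℕ) : Fin n)) := by
    rw [← Finset.sum_add_distrib]
    exact Finset.sum_congr rfl fun j _ => by ring
  rw [hfin]; ring


section ShiftLemmas

variable {n : ℕ} [NeZero n]

/-- The cyclic shift matrix. -/
noncomputable def shiftMat (n : ℕ) [NeZero n] : Matrix (Fin n) (Fin n) ℝ :=
  Matrix.of fun i j => if i = j + 1 then 1 else 0

lemma shiftMat_mul_apply (M : Matrix (Fin n) (Fin n) ℝ) (i j : Fin n) :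
    (shiftMat n * M) i j = M (i - 1) j := by
  rw [mul_apply]
  rw [Finset.sum_eq_single (i - 1)]
  · simp [shiftMat, sub_add_cancel]
  · intro k _ hk
    have : i ≠ k + 1 := fun h => hk (by rw [h]; ring)
    simp [shiftMat, this]
  · simp

lemma mul_shiftMat_apply (M : Matrix (Fin n) (Fin n) ℝ) (i j : Fin n) :
    (M * shiftMat n) i j = M i (j + 1) := by
  rw [mul_apply]
  rw [Finset.sum_eq_single (j + 1)]
  · simp [shiftMat]
  · intro k _ hk
    simp [shiftMat, hk]
  · simp

end ShiftLemmas

/-- **Theorem 2.** For `n` even positive, `m < n/2`, coupling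
coefficients `α₁, …, α_m ≥ 0`, and `V` the circulant symmetric matrix with
first column `v₀ = 1 + 2(α₁ + ⋯ + α_m)`, `v_j = v_{n-j} = -α_j` for
`1 ≤ j ≤ m`, and `v_j = 0` otherwise, `V` is positive definite and
`|Tr(F_n log₂ V)| = log₂(1 + 4(α₁ + α₃ + α₅ + ⋯))` (sum over odd indices). -/
theorem abs_trace_flip_logb_eq_logb_odd_couplings
    (n : ℕ) (hn : Even n) (hn0 : 0 < n)
    (m : ℕ) (hm : m < n / 2)
    (a : ℕ → ℝ) (ha : ∀ j, 0 ≤ a j)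
    (v : Fin n → ℝ)
    (hv : ∀ l : Fin n, v l =
      if (l : ℕ) = 0 then 1 + 2 * ∑ j ∈ Finset.Icc 1 m, a j
      else if (l : ℕ) ≤ m then -a (l : ℕ)
      else if n - (l : ℕ) ≤ m then -a (n - (l : ℕ))
      else 0)
    (V : Matrix (Fin n) (Fin n) ℝ) (hV : V = Matrix.circulant v) :
    V.PosDef
      ∧ |(flipMat n * mlogb2 V).trace|
          = Real.logb 2 (1 + 4 * ∑ j ∈ (Finset.Icc 1 m).filter (fun j => Odd j), a j) := by
  haveI : NeZero n := ⟨hn0.ne'⟩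
  obtain ⟨k, hk⟩ := hn
  have hk2 : n = 2 * k := by omega
  have hm2 : 2 * m + 2 ≤ n := by omega
  have hn' : Even n := ⟨k, hk⟩
  set A : ℝ := ∑ j ∈ Finset.Icc 1 m, a j with hA
  set lam : ℝ := 1 + 4 * ∑ j ∈ (Finset.Icc 1 m).filter (fun j => Odd j), a j with hlam
  set χ : Fin n → ℝ := fun i => (-1 : ℝ) ^ (i : ℕ) with hχ
  have hSUM := sum_v_mul n hn' hn0 m hm2 a v hv
  -- symmetry of v
  have hvsymm : ∀ t : Fin n, v (-t) = v t := by
    intro t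
    by_cases ht : t = 0
    · rw [ht, neg_zero]
    · have h1 : 1 ≤ (t : ℕ) := Nat.pos_of_ne_zero (fun h => ht (Fin.ext (by simp [h])))
      have h2 : (t : ℕ) < n := t.isLt
      have hval : ((-t : Fin n) : ℕ) = n - (t : ℕ) := by
        rw [show -t = 0 - t from (zero_sub t).symm, Fin.sub_def]
        simp only [Fin.val_zero, add_zero]
        exact Nat.mod_eq_of_lt (by omega)
      rw [hv, hv, hval]
      by_cases hta : (t : ℕ) ≤ m
      · rw [if_neg (by omega), if_neg (by omega), if_pos (by omega), if_neg (by omega),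
          if_pos hta]
        have : n - (n - (t : ℕ)) = (t : ℕ) := by omega
        rw [this]
      · by_cases htb : n - (t : ℕ) ≤ m
        · rw [if_neg (by omega), if_pos htb, if_neg (by omega), if_neg hta, if_pos htb]
        · rw [if_neg (by omega), if_neg (by omega), if_neg (by omega), if_neg (by omega),
            if_neg hta, if_neg htb]
  have hherm : V.IsHermitian := by
    show Vᴴ = V
    rw [hV]
    ext i j
    simp only [conjTranspose_apply, circulant_apply, star_trivial]
    rw [← neg_sub i j, hvsymm]
  -- eigenvector 1
  have hmul1 : V *ᵥ (fun _ => (1:ℝ)) = (1 : ℝ) • (fun _ => (1:ℝ)) := by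
    funext i
    have hrow : (V *ᵥ (fun _ => (1:ℝ))) i = ∑ j : Fin n, v (i - j) := by
      simp [hV, mulVec, dotProduct, circulant_apply]
    have hre : ∑ j : Fin n, v (i - j) = ∑ l : Fin n, v l * 1 := by
      refine Finset.sum_equiv (Equiv.subLeft i) (by simp) fun j _ => by simp
    have hval : ∑ l : Fin n, v l * (fun _ => (1:ℝ)) l = 1 := by
      rw [hSUM (fun _ => (1:ℝ))]
      have : ∑ j ∈ Finset.Icc 1 m, (-a j) * ((1:ℝ) + 1) = -(2 * A) := by
        rw [hA, Finset.mul_sum, ← Finset.sum_neg_distrib]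
        exact Finset.sum_congr rfl fun j _ => by ring
      rw [this]; ring
    simp only [hrow]
    rw [hre]
    simpa using hval
  -- character facts
  have hχcast : ∀ j : ℕ, j < n → χ ((j : ℕ) : Fin n) = (-1 : ℝ) ^ j := by
    intro j hj
    simp only [hχ, Fin.val_natCast, neg_one_pow_nat_mod hn']
  have hχsub : ∀ i l : Fin n, χ (i - l) = χ i * χ l := by
    intro i l
    have : i - l = i + (-l) := sub_eq_add_neg i l
    rw [this, hχ]
    simp only
    rw [chi_add hn' i (-l), chi_neg hn' l]
  -- eigenvector χ
  have hsumχ : ∑ l : Fin n, v l * χ l = lam := by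
    rw [hSUM χ]
    have hχ0 : χ 0 = 1 := by simp [hχ]
    have hterm : ∀ j ∈ Finset.Icc 1 m,
        (-a j) * (χ ((j : ℕ) : Fin n) + χ (-((j : ℕ) : Fin n)))
          = -(2 * ((-1:ℝ)^j * a j)) := by
      intro j hj
      rw [Finset.mem_Icc] at hj
      have hjn : j < n := by omega
      have h1 : χ (-((j : ℕ) : Fin n)) = χ ((j : ℕ) : Fin n) := by
        show (-1:ℝ) ^ ((-((j : ℕ) : Fin n) : Fin n) : ℕ) = _
        rw [chi_neg hn']
      rw [h1, hχcast j hjn]; ring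
    rw [Finset.sum_congr rfl hterm, hχ0, mul_one, hlam]
    have hpt : ∀ j ∈ Finset.Icc 1 m,
        -(2 * ((-1:ℝ)^j * a j)) = (if Odd j then 4 * a j else 0) - 2 * a j := by
      intro j _
      by_cases hj : Odd j
      · rw [if_pos hj, Odd.neg_one_pow hj]; ring
      · rw [if_neg hj, Even.neg_one_pow (Nat.not_odd_iff_even.mp hj)]; ring
    rw [Finset.sum_congr rfl hpt, Finset.sum_sub_distrib, ← Finset.sum_filter,
      show ∑ j ∈ (Finset.Icc 1 m).filter (fun j => Odd j), 4 * a j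
          = 4 * ∑ j ∈ (Finset.Icc 1 m).filter (fun j => Odd j), a j from
        (Finset.mul_sum _ _ _).symm,
      show ∑ j ∈ Finset.Icc 1 m, 2 * a j = 2 * A from by rw [hA]; exact (Finset.mul_sum _ _ _).symm]
    ring
  have hmulχ : V *ᵥ χ = lam • χ := by
    funext i
    have hrow : (V *ᵥ χ) i = ∑ j : Fin n, v (i - j) * χ j := by
      simp [hV, mulVec, dotProduct, circulant_apply]
    have hre : ∑ j : Fin n, v (i - j) * χ j = ∑ l : Fin n, v l * (χ i * χ l) := by
      have hχsq : ∀ t : Fin n, χ t * χ t = 1 := by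
        intro t
        show (-1:ℝ)^(t:ℕ) * (-1:ℝ)^(t:ℕ) = 1
        rw [← pow_add]
        exact Even.neg_one_pow ⟨(t:ℕ), rfl⟩
      refine Finset.sum_equiv (Equiv.subLeft i) (by simp) fun j _ => ?_
      simp only [Equiv.subLeft_apply]
      rw [hχsub i j, show χ i * (χ i * χ j) = (χ i * χ i) * χ j from by ring, hχsq i, one_mul]
    have : ∑ l : Fin n, v l * (χ i * χ l) = χ i * ∑ l : Fin n, v l * χ l := by
      rw [Finset.mul_sum]
      exact Finset.sum_congr rfl fun l _ => by ring
    rw [hrow, hre, this, hsumχ]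
    simp [mul_comm]
  -- positive definiteness
  have hposdef : V.PosDef := by
    refine PosDef.of_dotProduct_mulVec_pos hherm fun x hx => ?_
    set c : Fin n → ℝ := fun l => ∑ i : Fin n, x i * x (i - l) with hc
    have hdot : star x ⬝ᵥ (V *ᵥ x) = ∑ l : Fin n, v l * c l := by
      have hsx : star x = x := by funext i; simp
      rw [hsx]
      have h1 : x ⬝ᵥ (V *ᵥ x) = ∑ i : Fin n, ∑ j : Fin n, x i * (v (i - j) * x j) := by
        simp [hV, mulVec, dotProduct, circulant_apply, Finset.mul_sum, mul_assoc]
      have h2 : ∀ i : Fin n, ∑ j : Fin n, x i * (v (i - j) * x j)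
          = ∑ l : Fin n, v l * (x i * x (i - l)) := by
        intro i
        refine Finset.sum_equiv (Equiv.subLeft i) (by simp) fun j _ => ?_
        simp only [Equiv.subLeft_apply]
        rw [sub_sub_cancel]
        ring
      rw [h1, Finset.sum_congr rfl fun i _ => h2 i, Finset.sum_comm]
      exact Finset.sum_congr rfl fun l _ => by rw [hc, Finset.mul_sum]
    have hc0 : c 0 = ∑ i : Fin n, x i ^ 2 := by
      rw [hc]
      exact Finset.sum_congr rfl fun i _ => by rw [sub_zero]; ring
    have hc0pos : 0 < c 0 := by
      rw [hc0]
      have hex : ∃ i, x i ≠ 0 := Function.ne_iff.mp hx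
      obtain ⟨i0, hi0⟩ := hex
      refine Finset.sum_pos' (fun i _ => sq_nonneg _) ⟨i0, Finset.mem_univ _, ?_⟩
      positivity
    have hbound : ∀ l : Fin n, |c l| ≤ c 0 := by
      intro l
      have hsq : ∑ i : Fin n, x (i - l) ^ 2 = ∑ i : Fin n, x i ^ 2 := by
        refine Finset.sum_equiv (Equiv.subRight l) (by simp) fun i _ => by simp
      calc |c l| ≤ ∑ i : Fin n, |x i * x (i - l)| := Finset.abs_sum_le_sum_abs _ _
        _ ≤ ∑ i : Fin n, (x i ^ 2 + x (i - l) ^ 2) / 2 := by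
            refine Finset.sum_le_sum fun i _ => ?_
            rw [abs_mul]
            nlinarith [sq_nonneg (|x i| - |x (i - l)|), sq_abs (x i), sq_abs (x (i - l)),
              abs_nonneg (x i), abs_nonneg (x (i - l))]
        _ = (∑ i : Fin n, x i ^ 2 + ∑ i : Fin n, x (i - l) ^ 2) / 2 := by
            rw [← Finset.sum_add_distrib, Finset.sum_div]
        _ = c 0 := by rw [hsq, hc0]; ring
    rw [hdot, hSUM c]
    have hb2 : ∀ j ∈ Finset.Icc 1 m,
        -(a j) * (2 * c 0) ≤ (-a j) * (c ((j : ℕ) : Fin n) + c (-((j : ℕ) : Fin n))) := by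
      intro j _
      have b1 := hbound ((j : ℕ) : Fin n)
      have b2 := hbound (-((j : ℕ) : Fin n))
      have haj := ha j
      rw [abs_le] at b1 b2
      nlinarith
    have hsum_le := Finset.sum_le_sum hb2
    have : ∑ j ∈ Finset.Icc 1 m, -(a j) * (2 * c 0) = -(2 * c 0 * A) := by
      rw [← Finset.sum_mul,
        show (∑ j ∈ Finset.Icc 1 m, -a j) = -A from by
          rw [hA, ← Finset.sum_neg_distrib]]
      ring
    rw [this] at hsum_le
    have hAnn : 0 ≤ A := Finset.sum_nonneg fun j _ => ha j
    nlinarith [hsum_le, hc0pos]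
  refine ⟨hposdef, ?_⟩
  -- the matrix logarithm
  set X : Matrix (Fin n) (Fin n) ℝ := mlogb2 V with hX
  have hXd : X = cfc (fun x : ℝ => Real.logb 2 x) V := rfl
  have hXone : X *ᵥ (fun _ => (1:ℝ)) = (0:ℝ) • (fun _ => (1:ℝ)) := by
    rw [hXd]
    have := cfc_mulVec_eigenvector hherm (fun x : ℝ => Real.logb 2 x) hmul1
    simpa [Real.logb_one] using this
  have hXχ : X *ᵥ χ = Real.logb 2 lam • χ := by
    rw [hXd]
    exact cfc_mulVec_eigenvector hherm (fun x : ℝ => Real.logb 2 x) hmulχ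
  -- shift invariance of X
  have hSV : shiftMat n * V = V * shiftMat n := by
    ext i j
    rw [shiftMat_mul_apply, mul_shiftMat_apply, hV, circulant_apply, circulant_apply]
    congr 1
    abel
  have hSX : shiftMat n * X = X * shiftMat n := by
    rw [hXd]
    exact cfc_commute hherm _ hSV
  have hshift : ∀ i j : Fin n, X i j = X (i + 1) (j + 1) := by
    intro i j
    have := congrFun (congrFun hSX (i + 1)) j
    rw [shiftMat_mul_apply, mul_shiftMat_apply, add_sub_cancel_right] at this
    exact this
  have hinv' : ∀ (t : ℕ) (i j : Fin n), X (i + (t : Fin n)) (j + (t : Fin n)) = X i j := by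
    intro t
    induction t with
    | zero => intro i j; simp
    | succ t iht =>
      intro i j
      have hct : ((t + 1 : ℕ) : Fin n) = (t : Fin n) + 1 := by push_cast; ring
      rw [hct, ← add_assoc, ← add_assoc, ← hshift (i + (t : Fin n)) (j + (t : Fin n)), iht]
  have hinv : ∀ (s : Fin n) (i j : Fin n), X (i + s) (j + s) = X i j := by
    intro s i j
    have := hinv' (s : ℕ) i j
    rwa [Fin.cast_val_eq_self] at this
  -- trace computation
  have htr : (flipMat n * X).trace = ∑ i : Fin n, X i.rev i := by
    rw [trace]
    refine Finset.sum_congr rfl fun i _ => ?_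
    rw [diag_apply, mul_apply]
    rw [Finset.sum_eq_single i.rev]
    · have hi := i.isLt
      have hcond : (i : ℕ) + (n - ((i : ℕ) + 1)) = n - 1 := by omega
      simp [flipMat, Fin.val_rev, hcond]
    · intro j _ hj
      have hcond : ¬ ((i : ℕ) + (j : ℕ) = n - 1) := by
        intro hcc
        apply hj
        apply Fin.ext
        rw [Fin.val_rev]
        omega
      simp [flipMat, hcond]
    · simp
  have hstep : ∀ i : Fin n, X i.rev i = X 0 (((2 * (i : ℕ) + 1 : ℕ)) : Fin n) := by
    intro i
    have h1 : X 0 (i - i.rev) = X i.rev i := by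
      have := hinv (-i.rev) i.rev i
      rwa [add_neg_cancel, ← sub_eq_add_neg] at this
    have h2 : i - i.rev = (((2 * (i : ℕ) + 1 : ℕ)) : Fin n) := by
      apply Fin.ext
      simp only [Fin.sub_def, Fin.val_natCast, Fin.val_rev]
      have hi := i.isLt
      have he : n - (n - ((i : ℕ) + 1)) = (i : ℕ) + 1 := by omega
      rw [he]
      congr 1
      omega
    rw [← h1, h2]
  set G : ℕ → ℝ := fun t => X 0 (((2 * t + 1 : ℕ)) : Fin n) with hG
  have htr2 : (flipMat n * X).trace = ∑ t ∈ Finset.range n, G t := by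
    rw [htr, Finset.sum_congr rfl fun i _ => hstep i, ← Fin.sum_univ_eq_sum_range G n]
  have hGper : ∀ t : ℕ, G (k + t) = G t := by
    intro t
    have hcast : ((2 * (k + t) + 1 : ℕ) : Fin n) = ((2 * t + 1 : ℕ) : Fin n) := by
      have h1 : 2 * (k + t) + 1 = (2 * t + 1) + n := by omega
      rw [h1, Nat.cast_add, Fin.natCast_self, add_zero]
    show X 0 ((2 * (k + t) + 1 : ℕ) : Fin n) = X 0 ((2 * t + 1 : ℕ) : Fin n)
    rw [hcast]
  have hsplit : ∑ t ∈ Finset.range n, G t = 2 * ∑ t ∈ Finset.range k, G t := by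
    have hnkk : n = k + k := hk
    rw [hnkk, Finset.range_eq_Ico,
      ← Finset.sum_Ico_consecutive G (Nat.zero_le k) (Nat.le_add_right k k)]
    have h2 : ∑ t ∈ Finset.Ico k (k + k), G t = ∑ t ∈ Finset.range k, G t := by
      rw [Finset.sum_Ico_eq_sum_range]
      simp only [Nat.add_sub_cancel_left]
      exact Finset.sum_congr rfl fun t _ => hGper t
    rw [h2, ← Finset.range_eq_Ico]
    ring
  set H : ℕ → ℝ := fun t => (1 - (-1 : ℝ) ^ t) * X 0 ((t : ℕ) : Fin n) with hH
  have hHsum : ∑ t ∈ Finset.range n, H t = 2 * ∑ t ∈ Finset.range k, G t := by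
    rw [hk2, sum_range_two_mul H k, Finset.mul_sum]
    refine Finset.sum_congr rfl fun i _ => ?_
    have e1 : H (2 * i) = 0 := by
      rw [hH]
      simp only [Even.neg_one_pow (even_two_mul i)]
      ring
    have e2 : H (2 * i + 1) = 2 * G i := by
      rw [hH, hG]
      simp only [Odd.neg_one_pow (odd_two_mul_add_one i)]
      ring
    rw [e1, e2, zero_add]
  have hHfin : ∑ t ∈ Finset.range n, H t
      = (∑ j : Fin n, X 0 j) - ∑ j : Fin n, χ j * X 0 j := by
    rw [← Fin.sum_univ_eq_sum_range H n]
    rw [← Finset.sum_sub_distrib]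
    refine Finset.sum_congr rfl fun j _ => ?_
    rw [hH]
    simp only [Fin.cast_val_eq_self, hχ]
    ring
  have hrow1 : ∑ j : Fin n, X 0 j = 0 := by
    have := congrFun hXone 0
    simpa [mulVec, dotProduct] using this
  have hrowχ : ∑ j : Fin n, χ j * X 0 j = Real.logb 2 lam := by
    have := congrFun hXχ 0
    have hχ0 : χ 0 = 1 := by simp [hχ]
    simp only [mulVec, dotProduct, Pi.smul_apply, smul_eq_mul, hχ0, mul_one] at this
    rw [← this]
    exact Finset.sum_congr rfl fun j _ => by ring
  have htrval : (flipMat n * X).trace = -(Real.logb 2 lam) := by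
    rw [htr2, hsplit, ← hHsum, hHfin, hrow1, hrowχ, zero_sub]
  rw [htrval, abs_neg, abs_of_nonneg]
  apply Real.logb_nonneg one_lt_two
  have : 0 ≤ ∑ j ∈ (Finset.Icc 1 m).filter (fun j => Odd j), a j :=
    Finset.sum_nonneg fun j _ => ha j
  rw [hlam]; linarith
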